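/- For every deterministic program M (possibly with low-security inputs), the maximum of the min-entropy-based quantitative information flow over all distributions equals the channel capacity: max_μ ME[μ](M) = CC(M). -/

import Mathlib

/-!
Statement 6: For every deterministic program `M : ℍ × 𝕃 → 𝕆`,
`max_μ ME[μ](M) = CC(M)`, where the maximum is over all probability
distributions `μ` on `ℍ × 𝕃` and `CC(M) = max_μ SE[μ](M)`.
-/

/-- `p · log₂(1/p)`, one summand of the Shannon entropy. -/
noncomputable def entTerm (p : ℝ) : ℝ := p * Real.logb 2 (1 / p)

variable {Hi Li Oi : Type*}

/-- Marginal probability `μ(L = ℓ)`. -/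
noncomputable def pL [Fintype Hi] (μ : Hi × Li → ℝ) (ℓ : Li) : ℝ := ∑ h, μ (h, ℓ)

/-- Joint probability `μ(O = o, L = ℓ)` where `O = M(H,L)`. -/
noncomputable def pOL [Fintype Hi] [DecidableEq Oi] (M : Hi × Li → Oi) (μ : Hi × Li → ℝ)
    (o : Oi) (ℓ : Li) : ℝ := ∑ h, if M (h, ℓ) = o then μ (h, ℓ) else 0

/-- Conditional Shannon entropy `𝓗[μ](H|L)`. -/
noncomputable def condEntHL [Fintype Hi] [Fintype Li] (μ : Hi × Li → ℝ) : ℝ :=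
  ∑ ℓ : Li, pL μ ℓ * ∑ h : Hi, entTerm (μ (h, ℓ) / pL μ ℓ)

/-- Conditional Shannon entropy `𝓗[μ](H|O,L)` where `O = M(H,L)`. -/
noncomputable def condEntHOL [Fintype Hi] [Fintype Li] [Fintype Oi] [DecidableEq Oi]
    (M : Hi × Li → Oi) (μ : Hi × Li → ℝ) : ℝ :=
  ∑ ℓ : Li, ∑ o : Oi,
    pOL M μ o ℓ * ∑ h : Hi, entTerm ((if M (h, ℓ) = o then μ (h, ℓ) else 0) / pOL M μ o ℓ)

/-- Shannon-entropy-based QIF `SE[μ](M) = 𝓗[μ](H|L) − 𝓗[μ](H|O,L)`. -/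
noncomputable def SE [Fintype Hi] [Fintype Li] [Fintype Oi] [DecidableEq Oi]
    (M : Hi × Li → Oi) (μ : Hi × Li → ℝ) : ℝ :=
  condEntHL μ - condEntHOL M μ

/-- Channel-capacity-based QIF `CC(M) = max_μ SE[μ](M)`. -/
noncomputable def CC [Fintype Hi] [Fintype Li] [Fintype Oi] [DecidableEq Oi]
    (M : Hi × Li → Oi) : ℝ :=
  sSup {x : ℝ | ∃ μ : Hi × Li → ℝ, (∀ a, 0 ≤ μ a) ∧ (∑ a, μ a = 1) ∧ x = SE M μ}

/-- Conditional vulnerability `𝓥[μ](H|L) = Σ_ℓ μ(L=ℓ) · max_h μ(H=h|L=ℓ)`. -/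
noncomputable def VHL [Fintype Hi] [Fintype Li] [Nonempty Hi] (μ : Hi × Li → ℝ) : ℝ :=
  ∑ ℓ : Li, pL μ ℓ *
    Finset.univ.sup' Finset.univ_nonempty (fun h : Hi => μ (h, ℓ) / pL μ ℓ)

/-- Conditional vulnerability `𝓥[μ](H|O,L)` where `O = M(H,L)`. -/
noncomputable def VHOL [Fintype Hi] [Fintype Li] [Fintype Oi] [DecidableEq Oi] [Nonempty Hi]
    (M : Hi × Li → Oi) (μ : Hi × Li → ℝ) : ℝ :=
  ∑ ℓ : Li, ∑ o : Oi, pOL M μ o ℓ *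
    Finset.univ.sup' Finset.univ_nonempty
      (fun h : Hi => (if M (h, ℓ) = o then μ (h, ℓ) else 0) / pOL M μ o ℓ)

/-- Min-entropy-based QIF `ME[μ](M) = 𝓗∞[μ](H|L) − 𝓗∞[μ](H|O,L)`. -/
noncomputable def ME [Fintype Hi] [Fintype Li] [Fintype Oi] [DecidableEq Oi] [Nonempty Hi]
    (M : Hi × Li → Oi) (μ : Hi × Li → ℝ) : ℝ :=
  Real.logb 2 (1 / VHL μ) - Real.logb 2 (1 / VHOL M μ)



noncomputable def phiB (x : ℝ) : ℝ := x * Real.logb 2 x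

lemma entTerm_zero : entTerm 0 = 0 := by simp [entTerm]

lemma phiB_zero : phiB 0 = 0 := by simp [phiB]

lemma mul_entTerm_div {p c : ℝ} (hp : 0 ≤ p) (hc : 0 < c) :
    c * entTerm (p / c) = p * Real.logb 2 c - phiB p := by
  rcases hp.eq_or_lt with h | h
  · simp [← h, entTerm, phiB]
  · unfold entTerm phiB
    rw [one_div_div, Real.logb_div hc.ne' h.ne']
    field_simp

lemma sum_mul_entTerm_div {ι : Type*} (s : Finset ι) (q : ι → ℝ)
    (hq : ∀ i ∈ s, 0 ≤ q i) :
    (∑ i ∈ s, q i) * ∑ i ∈ s, entTerm (q i / ∑ i ∈ s, q i)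
      = phiB (∑ i ∈ s, q i) - ∑ i ∈ s, phiB (q i) := by
  set c := ∑ i ∈ s, q i with hc
  rcases (Finset.sum_nonneg hq).eq_or_lt with h | h
  · have hz : ∀ i ∈ s, q i = 0 := by
      intro i hi
      exact (Finset.sum_eq_zero_iff_of_nonneg hq).mp h.symm i hi
    have hc0 : c = 0 := h.symm
    rw [hc0, phiB_zero, Finset.sum_eq_zero (fun i hi => by rw [hz i hi]; simp [entTerm]),
      Finset.sum_eq_zero (fun i hi => by rw [hz i hi, phiB_zero])]
    ring
  · rw [Finset.mul_sum, Finset.sum_congr rfl (fun i hi => mul_entTerm_div (hq i hi) h),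
      Finset.sum_sub_distrib, ← Finset.sum_mul, ← hc, phiB]

lemma concaveOn_logb2 : ConcaveOn ℝ (Set.Ioi 0) (Real.logb 2) := by
  have h : Real.logb 2 = fun x => (Real.log 2)⁻¹ • Real.log x := by
    funext x; simp [Real.logb, div_eq_inv_mul]
  rw [h]
  exact ConcaveOn.smul (by positivity) strictConcaveOn_log_Ioi.concaveOn

lemma sum_entTerm_le {ι : Type*} (s : Finset ι) (q : ι → ℝ) (hq : ∀ i ∈ s, 0 ≤ q i)
    {c : ℝ} (hc : 0 < c) (hsum : ∑ i ∈ s, q i = c) :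
    ∑ i ∈ s, entTerm (q i / c) ≤ Real.logb 2 s.card := by
  classical
  set T := s.filter (fun i => q i ≠ 0) with hT
  have hTsub : T ⊆ s := Finset.filter_subset _ _
  have hsumT : ∑ i ∈ T, q i = c := by rw [hT, Finset.sum_filter_ne_zero]; exact hsum
  have hqpos : ∀ i ∈ T, 0 < q i := by
    intro i hi
    rcases Finset.mem_filter.mp hi with ⟨his, hne⟩
    exact lt_of_le_of_ne (hq i his) (Ne.symm hne)
  have hrestrict : ∑ i ∈ s, entTerm (q i / c) = ∑ i ∈ T, entTerm (q i / c) := by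
    rw [hT]
    refine (Finset.sum_filter_of_ne ?_).symm
    intro i _ hne
    intro h0
    apply hne; rw [h0]; simp [entTerm]
  have hTne : T.Nonempty := by
    by_contra hcon
    rw [Finset.not_nonempty_iff_eq_empty] at hcon
    rw [hcon, Finset.sum_empty] at hsumT
    exact hc.ne hsumT
  have hw : ∀ i ∈ T, (0:ℝ) ≤ q i / c := fun i hi => div_nonneg (hq i (hTsub hi)) hc.le
  have hw1 : ∑ i ∈ T, q i / c = 1 := by rw [← Finset.sum_div, hsumT, div_self hc.ne']
  have hmem : ∀ i ∈ T, c / q i ∈ Set.Ioi (0:ℝ) := fun i hi => by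
    have := hqpos i hi; exact Set.mem_Ioi.mpr (by positivity)
  have hjensen := concaveOn_logb2.le_map_sum hw hw1 hmem
  have hpts : ∑ i ∈ T, (q i / c) • (c / q i) = (T.card : ℝ) := by
    rw [Finset.sum_congr rfl (fun i hi => show (q i / c) • (c / q i) = 1 by
      have := hqpos i hi
      rw [smul_eq_mul]; field_simp)]
    simp
  have hlhs : ∑ i ∈ T, entTerm (q i / c) = ∑ i ∈ T, (q i / c) • Real.logb 2 (c / q i) := by
    refine Finset.sum_congr rfl (fun i hi => ?_)
    rw [entTerm, one_div_div, smul_eq_mul]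
  rw [hrestrict, hlhs]
  refine hjensen.trans ?_
  rw [hpts]
  have hTcardpos : (0:ℝ) < T.card := by
    exact_mod_cast Finset.card_pos.mpr hTne
  exact Real.logb_le_logb_of_le one_lt_two hTcardpos (by exact_mod_cast Finset.card_le_card hTsub)

lemma sum_mul_sup_div {Hi : Type*} [Fintype Hi] [Nonempty Hi] (q : Hi → ℝ)
    (hq : ∀ h, 0 ≤ q h) :
    (∑ h, q h) * Finset.univ.sup' Finset.univ_nonempty (fun h => q h / ∑ h, q h)
      = Finset.univ.sup' Finset.univ_nonempty q := by
  set c := ∑ h, q h with hc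
  rcases (Finset.sum_nonneg (fun h _ => hq h)).eq_or_lt with h | h
  · have hz : ∀ i : Hi, q i = 0 := by
      intro i
      exact (Finset.sum_eq_zero_iff_of_nonneg (fun h _ => hq h)).mp h.symm i (Finset.mem_univ i)
    have hc0 : c = 0 := h.symm
    rw [hc0, zero_mul]
    rw [Finset.sup'_congr Finset.univ_nonempty rfl (fun i _ => hz i)]
    simp
  · have hdiv : Finset.univ.sup' Finset.univ_nonempty (fun h => q h / c)
        = (Finset.univ.sup' Finset.univ_nonempty q) / c := by
      rw [eq_comm]
      exact Finset.comp_sup'_eq_sup'_comp Finset.univ_nonempty (fun x => x / c)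
        (fun x y => by rw [max_div_div_right h.le])
    rw [hdiv]
    field_simp
    exact mul_div_cancel_left₀ _ (show c ≠ 0 from h.ne')

set_option linter.unusedSectionVars false
set_option linter.unusedVariables false
section Simp
variable {Hi Li Oi : Type*} [Fintype Hi] [Fintype Li] [Fintype Oi] [DecidableEq Oi]

lemma pL_nonneg (μ : Hi × Li → ℝ) (hμ : ∀ a, 0 ≤ μ a) (ℓ : Li) : 0 ≤ pL μ ℓ :=
  Finset.sum_nonneg fun h _ => hμ _

lemma pOL_nonneg (M : Hi × Li → Oi) (μ : Hi × Li → ℝ) (hμ : ∀ a, 0 ≤ μ a) (o : Oi) (ℓ : Li) :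
    0 ≤ pOL M μ o ℓ :=
  Finset.sum_nonneg fun h _ => by split <;> [exact hμ _; exact le_rfl]

lemma sum_pOL (M : Hi × Li → Oi) (μ : Hi × Li → ℝ) (ℓ : Li) :
    ∑ o, pOL M μ o ℓ = pL μ ℓ := by
  unfold pOL pL
  rw [Finset.sum_comm]
  refine Finset.sum_congr rfl fun h _ => ?_
  simp

lemma sum_pL (μ : Hi × Li → ℝ) : ∑ ℓ, pL μ ℓ = ∑ a, μ a := by
  unfold pL
  rw [Finset.sum_comm, ← Fintype.sum_prod_type]

lemma pOL_eq_zero_of_not_mem (M : Hi × Li → Oi) (μ : Hi × Li → ℝ) {o : Oi} {ℓ : Li}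
    (ho : o ∉ Finset.univ.image fun h => M (h, ℓ)) : pOL M μ o ℓ = 0 := by
  unfold pOL
  refine Finset.sum_eq_zero fun h _ => ?_
  rw [if_neg]
  intro heq
  exact ho (Finset.mem_image.mpr ⟨h, Finset.mem_univ h, heq⟩)

lemma condEntHL_eq (μ : Hi × Li → ℝ) (hμ : ∀ a, 0 ≤ μ a) :
    condEntHL μ = ∑ ℓ, (phiB (pL μ ℓ) - ∑ h, phiB (μ (h, ℓ))) := by
  unfold condEntHL
  refine Finset.sum_congr rfl fun ℓ _ => ?_
  exact sum_mul_entTerm_div Finset.univ (fun h => μ (h, ℓ)) (fun h _ => hμ _)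

lemma condEntHOL_eq (M : Hi × Li → Oi) (μ : Hi × Li → ℝ) (hμ : ∀ a, 0 ≤ μ a) :
    condEntHOL M μ = ∑ ℓ, ((∑ o, phiB (pOL M μ o ℓ)) - ∑ h, phiB (μ (h, ℓ))) := by
  unfold condEntHOL
  refine Finset.sum_congr rfl fun ℓ _ => ?_
  have h1 : ∀ o : Oi, pOL M μ o ℓ *
      ∑ h, entTerm ((if M (h, ℓ) = o then μ (h, ℓ) else 0) / pOL M μ o ℓ)
      = phiB (pOL M μ o ℓ) - ∑ h, phiB (if M (h, ℓ) = o then μ (h, ℓ) else 0) := by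
    intro o
    exact sum_mul_entTerm_div Finset.univ _
      (fun h _ => by split <;> [exact hμ _; exact le_rfl])
  rw [Finset.sum_congr rfl fun o _ => h1 o, Finset.sum_sub_distrib]
  congr 1
  rw [Finset.sum_comm]
  refine Finset.sum_congr rfl fun h _ => ?_
  rw [Finset.sum_congr rfl fun o _ => apply_ite phiB _ _ _]
  simp [phiB_zero]

lemma SE_eq (M : Hi × Li → Oi) (μ : Hi × Li → ℝ) (hμ : ∀ a, 0 ≤ μ a) :
    SE M μ = ∑ ℓ, (phiB (pL μ ℓ) - ∑ o, phiB (pOL M μ o ℓ)) := by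
  unfold SE
  rw [condEntHL_eq μ hμ, condEntHOL_eq M μ hμ, ← Finset.sum_sub_distrib]
  refine Finset.sum_congr rfl fun ℓ _ => ?_
  ring

lemma VHL_eq [Nonempty Hi] (μ : Hi × Li → ℝ) (hμ : ∀ a, 0 ≤ μ a) :
    VHL μ = ∑ ℓ, Finset.univ.sup' Finset.univ_nonempty (fun h : Hi => μ (h, ℓ)) := by
  unfold VHL
  refine Finset.sum_congr rfl fun ℓ _ => ?_
  exact sum_mul_sup_div (fun h => μ (h, ℓ)) (fun h => hμ _)

lemma VHOL_eq [Nonempty Hi] (M : Hi × Li → Oi) (μ : Hi × Li → ℝ) (hμ : ∀ a, 0 ≤ μ a) :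
    VHOL M μ = ∑ ℓ, ∑ o, Finset.univ.sup' Finset.univ_nonempty
      (fun h : Hi => if M (h, ℓ) = o then μ (h, ℓ) else 0) := by
  unfold VHOL
  refine Finset.sum_congr rfl fun ℓ _ => Finset.sum_congr rfl fun o _ => ?_
  exact sum_mul_sup_div _ (fun h => by split <;> [exact hμ _; exact le_rfl])

end Simp

set_option maxHeartbeats 1000000

/-- The maximum of `ME[μ](M)` over all distributions equals the channel
capacity `CC(M)`. -/

theorem maxME_eq_CC
    [Fintype Hi] [Fintype Li] [Fintype Oi] [DecidableEq Oi] [Nonempty Hi] [Nonempty Li]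
    (M : Hi × Li → Oi) :
    sSup {x : ℝ | ∃ μ : Hi × Li → ℝ, (∀ a, 0 ≤ μ a) ∧ (∑ a, μ a = 1) ∧ x = ME M μ} =
      CC M := by
  classical
  set n : Li → ℕ := fun ℓ => (Finset.univ.image fun h : Hi => M (h, ℓ)).card with hn
  obtain ⟨ℓ0, -, hℓ0⟩ := Finset.exists_mem_eq_sup' (Finset.univ_nonempty (α := Li)) n
  set K : ℕ := n ℓ0 with hK
  have hKmax : ∀ ℓ, n ℓ ≤ K := fun ℓ => hℓ0 ▸ Finset.le_sup' n (Finset.mem_univ ℓ)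
  set img0 := Finset.univ.image fun h : Hi => M (h, ℓ0) with himg0
  have himg0ne : img0.Nonempty := Finset.image_nonempty.mpr Finset.univ_nonempty
  have hK1 : 1 ≤ K := by
    rw [hK, hn]
    exact Finset.card_pos.mpr himg0ne
  have hKR : (0:ℝ) < K := by exact_mod_cast hK1
  -- upper bound for SE
  have hSE_le : ∀ μ : Hi × Li → ℝ, (∀ a, 0 ≤ μ a) → (∑ a, μ a = 1) →
      SE M μ ≤ Real.logb 2 K := by
    intro μ hμ hsum
    rw [SE_eq M μ hμ]
    have hbound : ∀ ℓ : Li, phiB (pL μ ℓ) - ∑ o, phiB (pOL M μ o ℓ)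
        ≤ pL μ ℓ * Real.logb 2 K := by
      intro ℓ
      set img := Finset.univ.image fun h : Hi => M (h, ℓ) with himg
      have hOsum : ∑ o ∈ img, pOL M μ o ℓ = pL μ ℓ := by
        rw [Finset.sum_subset (Finset.subset_univ img)
          (fun o _ ho => pOL_eq_zero_of_not_mem M μ ho), sum_pOL]
      have hOres : ∑ o : Oi, phiB (pOL M μ o ℓ) = ∑ o ∈ img, phiB (pOL M μ o ℓ) := by
        refine (Finset.sum_subset (Finset.subset_univ img) ?_).symm
        intro o _ ho
        rw [pOL_eq_zero_of_not_mem M μ ho, phiB_zero]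
      rcases (pL_nonneg μ hμ ℓ).eq_or_lt with h0 | hpos
      · have hz : ∀ o, pOL M μ o ℓ = 0 := by
          intro o
          refine (Finset.sum_eq_zero_iff_of_nonneg
            (fun o' _ => pOL_nonneg M μ hμ o' ℓ)).mp ?_ o (Finset.mem_univ o)
          rw [sum_pOL, ← h0]
        rw [← h0, Finset.sum_eq_zero (fun o _ => by rw [hz o, phiB_zero])]
        simp [phiB_zero]
      · have key : phiB (pL μ ℓ) - ∑ o ∈ img, phiB (pOL M μ o ℓ)
            = pL μ ℓ * ∑ o ∈ img, entTerm (pOL M μ o ℓ / pL μ ℓ) := by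
          have h2 := sum_mul_entTerm_div img (fun o => pOL M μ o ℓ)
            (fun o _ => pOL_nonneg M μ hμ o ℓ)
          rw [hOsum] at h2
          exact h2.symm
        rw [hOres, key]
        have hle := sum_entTerm_le img (fun o => pOL M μ o ℓ)
          (fun o _ => pOL_nonneg M μ hμ o ℓ) hpos hOsum
        have hcard : (img.card : ℝ) ≤ (K : ℝ) := by exact_mod_cast hKmax ℓ
        have hcpos : (0:ℝ) < img.card := by
          have : img.Nonempty := Finset.image_nonempty.mpr Finset.univ_nonempty
          exact_mod_cast Finset.card_pos.mpr this
        have hlogb : Real.logb 2 img.card ≤ Real.logb 2 K :=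
          Real.logb_le_logb_of_le one_lt_two hcpos hcard
        calc pL μ ℓ * ∑ o ∈ img, entTerm (pOL M μ o ℓ / pL μ ℓ)
            ≤ pL μ ℓ * Real.logb 2 img.card := by
              exact mul_le_mul_of_nonneg_left hle hpos.le
          _ ≤ pL μ ℓ * Real.logb 2 K := mul_le_mul_of_nonneg_left hlogb hpos.le
    calc ∑ ℓ, (phiB (pL μ ℓ) - ∑ o, phiB (pOL M μ o ℓ))
        ≤ ∑ ℓ, pL μ ℓ * Real.logb 2 K := Finset.sum_le_sum fun ℓ _ => hbound ℓ
      _ = (∑ ℓ, pL μ ℓ) * Real.logb 2 K := by rw [Finset.sum_mul]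
      _ = Real.logb 2 K := by rw [sum_pL, hsum, one_mul]
  -- upper bound for ME
  have hME_le : ∀ μ : Hi × Li → ℝ, (∀ a, 0 ≤ μ a) → (∑ a, μ a = 1) →
      ME M μ ≤ Real.logb 2 K := by
    intro μ hμ hsum
    set A : Li → ℝ := fun ℓ => Finset.univ.sup' Finset.univ_nonempty
      (fun h : Hi => μ (h, ℓ)) with hA
    have hA0 : ∀ ℓ, 0 ≤ A ℓ := by
      intro ℓ
      have h' := Finset.le_sup' (fun h : Hi => μ (h, ℓ)) (Finset.mem_univ (Classical.arbitrary Hi))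
      exact le_trans (hμ (Classical.arbitrary Hi, ℓ)) h'
    have hVHL : VHL μ = ∑ ℓ, A ℓ := VHL_eq μ hμ
    have hex : ∃ a : Hi × Li, 0 < μ a := by
      by_contra hcon
      push_neg at hcon
      have h0 : ∑ a, μ a = 0 :=
        Finset.sum_eq_zero fun a _ => le_antisymm (hcon a) (hμ a)
      rw [hsum] at h0
      norm_num at h0
    obtain ⟨⟨h1, ℓ1⟩, hpos1⟩ := hex
    have hVHLpos : 0 < VHL μ := by
      rw [hVHL]
      have hAℓ1 : 0 < A ℓ1 := lt_of_lt_of_le hpos1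
        (Finset.le_sup' (fun h : Hi => μ (h, ℓ1)) (Finset.mem_univ h1))
      exact lt_of_lt_of_le hAℓ1
        (Finset.single_le_sum (fun ℓ _ => hA0 ℓ) (Finset.mem_univ ℓ1))
    have hVHOL : VHOL M μ = ∑ ℓ, ∑ o, Finset.univ.sup' Finset.univ_nonempty
        (fun h : Hi => if M (h, ℓ) = o then μ (h, ℓ) else 0) := VHOL_eq M μ hμ
    have hsup0 : ∀ (ℓ : Li) (o : Oi), 0 ≤ Finset.univ.sup' Finset.univ_nonempty
        (fun h : Hi => if M (h, ℓ) = o then μ (h, ℓ) else 0) := by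
      intro ℓ o
      have h' := Finset.le_sup' (fun h : Hi => if M (h, ℓ) = o then μ (h, ℓ) else 0)
        (Finset.mem_univ (Classical.arbitrary Hi))
      refine le_trans ?_ h'
      split <;> [exact hμ _; exact le_rfl]
    have hmono : VHL μ ≤ VHOL M μ := by
      rw [hVHL, hVHOL]
      refine Finset.sum_le_sum fun ℓ _ => ?_
      obtain ⟨h0, -, hh0⟩ := Finset.exists_mem_eq_sup' Finset.univ_nonempty
        (fun h : Hi => μ (h, ℓ))
      have step : A ℓ ≤ Finset.univ.sup' Finset.univ_nonempty
          (fun h : Hi => if M (h, ℓ) = M (h0, ℓ) then μ (h, ℓ) else 0) := by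
        have : A ℓ = μ (h0, ℓ) := hh0
        rw [this]
        refine le_trans (le_of_eq ?_) (Finset.le_sup' _ (Finset.mem_univ h0))
        rw [if_pos rfl]
      exact le_trans step
        (Finset.single_le_sum (fun o _ => hsup0 ℓ o) (Finset.mem_univ (M (h0, ℓ))))
    have hKmul : VHOL M μ ≤ (K:ℝ) * VHL μ := by
      rw [hVHL, hVHOL, Finset.mul_sum]
      refine Finset.sum_le_sum fun ℓ _ => ?_
      set img := Finset.univ.image fun h : Hi => M (h, ℓ) with himg
      have hres : ∑ o : Oi, Finset.univ.sup' Finset.univ_nonempty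
          (fun h : Hi => if M (h, ℓ) = o then μ (h, ℓ) else 0)
          = ∑ o ∈ img, Finset.univ.sup' Finset.univ_nonempty
          (fun h : Hi => if M (h, ℓ) = o then μ (h, ℓ) else 0) := by
        refine (Finset.sum_subset (Finset.subset_univ img) ?_).symm
        intro o _ ho
        have hz : ∀ h : Hi, (if M (h, ℓ) = o then μ (h, ℓ) else 0) = 0 := fun h =>
          if_neg fun heq => ho (Finset.mem_image.mpr ⟨h, Finset.mem_univ h, heq⟩)
        rw [Finset.sup'_congr Finset.univ_nonempty rfl (fun h _ => hz h)]
        exact Finset.sup'_const _ 0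
      rw [hres]
      have hcard : (img.card : ℝ) ≤ (K : ℝ) := by exact_mod_cast hKmax ℓ
      calc ∑ o ∈ img, Finset.univ.sup' Finset.univ_nonempty
            (fun h : Hi => if M (h, ℓ) = o then μ (h, ℓ) else 0)
          ≤ ∑ _o ∈ img, A ℓ := by
            refine Finset.sum_le_sum fun o _ => ?_
            refine Finset.sup'_le _ _ fun h _ => ?_
            split
            · exact Finset.le_sup' (fun h' : Hi => μ (h', ℓ)) (Finset.mem_univ h)
            · exact hA0 ℓ
        _ = (img.card : ℝ) * A ℓ := by rw [Finset.sum_const, nsmul_eq_mul]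
        _ ≤ (K:ℝ) * A ℓ := mul_le_mul_of_nonneg_right hcard (hA0 ℓ)
    have hVHOLpos : 0 < VHOL M μ := lt_of_lt_of_le hVHLpos hmono
    unfold ME
    rw [one_div, one_div, Real.logb_inv, Real.logb_inv]
    have hfin : Real.logb 2 (VHOL M μ) ≤ Real.logb 2 ((K:ℝ) * VHL μ) :=
      Real.logb_le_logb_of_le one_lt_two hVHOLpos hKmul
    rw [Real.logb_mul (ne_of_gt hKR) (ne_of_gt hVHLpos)] at hfin
    linarith
  -- construction of the maximizing distribution
  have hrepex : ∀ o ∈ img0, ∃ h : Hi, M (h, ℓ0) = o := fun o ho => by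
    obtain ⟨h, -, hh⟩ := Finset.mem_image.mp ho
    exact ⟨h, hh⟩
  set rep : Oi → Hi := fun o =>
    if hh : ∃ h : Hi, M (h, ℓ0) = o then hh.choose else Classical.arbitrary Hi with hrepdef
  have hrep : ∀ o ∈ img0, M (rep o, ℓ0) = o := by
    intro o ho
    have hh := hrepex o ho
    rw [hrepdef]
    dsimp only
    rw [dif_pos hh]
    exact hh.choose_spec
  set T := img0.image rep with hT
  have hinj : Set.InjOn rep img0 := by
    intro a ha b hb hab
    rw [← hrep a ha, ← hrep b hb, hab]
  have hTcard : T.card = K := by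
    rw [hT, Finset.card_image_of_injOn hinj, hK, hn, himg0]
  set μs : Hi × Li → ℝ := fun a => if a.2 = ℓ0 ∧ a.1 ∈ T then ((K:ℕ):ℝ)⁻¹ else 0 with hμs
  have hμs0 : ∀ a, 0 ≤ μs a := by
    intro a
    rw [hμs]
    dsimp only
    split
    · positivity
    · exact le_rfl
  have huniq : ∀ (h : Hi) (o : Oi), h ∈ T → M (h, ℓ0) = o → h = rep o := by
    intro h o hhT hM
    obtain ⟨o', ho', rfl⟩ := Finset.mem_image.mp hhT
    rw [hrep o' ho'] at hM
    rw [hM]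
  have hpL0 : pL μs ℓ0 = 1 := by
    unfold pL
    have hstep : ∀ h : Hi, μs (h, ℓ0) = if h ∈ T then ((K:ℕ):ℝ)⁻¹ else 0 := by
      intro h
      rw [hμs]
      simp
    rw [Finset.sum_congr rfl fun h _ => hstep h, Finset.sum_ite_mem,
      Finset.univ_inter, Finset.sum_const, hTcard, nsmul_eq_mul]
    field_simp
  have hpL : ∀ ℓ, pL μs ℓ = if ℓ = ℓ0 then 1 else 0 := by
    intro ℓ
    by_cases hℓ : ℓ = ℓ0
    · rw [if_pos hℓ, hℓ]
      exact hpL0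
    · rw [if_neg hℓ]
      refine Finset.sum_eq_zero fun h _ => ?_
      rw [hμs]
      simp [hℓ]
  have hμs1 : ∑ a, μs a = 1 := by
    rw [← sum_pL μs, Finset.sum_congr rfl fun ℓ _ => hpL ℓ]
    simp
  have hindterm : ∀ (o : Oi), o ∈ img0 → ∀ h : Hi,
      (if M (h, ℓ0) = o then μs (h, ℓ0) else 0) = if h = rep o then ((K:ℕ):ℝ)⁻¹ else 0 := by
    intro o ho h
    by_cases hh : h = rep o
    · subst hh
      rw [if_pos (hrep o ho), if_pos rfl, hμs]
      have : rep o ∈ T := Finset.mem_image_of_mem rep ho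
      simp [this]
    · rw [if_neg hh]
      by_cases hM : M (h, ℓ0) = o
      · rw [if_pos hM, hμs]
        dsimp only
        rw [if_neg]
        rintro ⟨-, hhT⟩
        exact hh (huniq h o hhT hM)
      · rw [if_neg hM]
  have hpOL0 : ∀ o, pOL M μs o ℓ0 = if o ∈ img0 then ((K:ℕ):ℝ)⁻¹ else 0 := by
    intro o
    by_cases ho : o ∈ img0
    · rw [if_pos ho]
      unfold pOL
      rw [Finset.sum_congr rfl fun h _ => hindterm o ho h]
      simp
    · rw [if_neg ho]
      exact pOL_eq_zero_of_not_mem M μs ho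
  have hpOLne : ∀ (o : Oi) (ℓ : Li), ℓ ≠ ℓ0 → pOL M μs o ℓ = 0 := by
    intro o ℓ hne
    refine Finset.sum_eq_zero fun h _ => ?_
    have : μs (h, ℓ) = 0 := by rw [hμs]; simp [hne]
    rw [this]
    simp
  have hKne : ((K:ℕ):ℝ) ≠ 0 := ne_of_gt hKR
  -- SE value at μs
  have hSEs : SE M μs = Real.logb 2 K := by
    rw [SE_eq M μs hμs0]
    have hterm0 : phiB (pL μs ℓ0) - ∑ o, phiB (pOL M μs o ℓ0) = Real.logb 2 K := by
      rw [hpL0]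
      rw [Finset.sum_congr rfl fun o _ => by
        rw [hpOL0 o, apply_ite phiB, phiB_zero]]
      rw [Finset.sum_ite_mem, Finset.univ_inter, Finset.sum_const, nsmul_eq_mul]
      have himgK : ((img0.card : ℕ) : ℝ) = (K:ℝ) := by
        rw [hK, hn]
      rw [himgK]
      have hphi1 : phiB 1 = 0 := by simp [phiB]
      have hphiK : phiB ((K:ℝ))⁻¹ = (K:ℝ)⁻¹ * (-Real.logb 2 K) := by
        rw [phiB, Real.logb_inv]
      rw [hphi1, hphiK]
      field_simp
      ring
    have hterm : ∀ ℓ, (phiB (pL μs ℓ) - ∑ o, phiB (pOL M μs o ℓ))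
        = if ℓ = ℓ0 then Real.logb 2 K else 0 := by
      intro ℓ
      by_cases hℓ : ℓ = ℓ0
      · rw [if_pos hℓ, hℓ]
        exact hterm0
      · rw [if_neg hℓ, hpL, if_neg hℓ,
          Finset.sum_eq_zero fun o _ => by rw [hpOLne o ℓ hℓ, phiB_zero]]
        simp [phiB_zero]
    rw [Finset.sum_congr rfl fun ℓ _ => hterm ℓ]
    simp
  -- ME value at μs
  have hMEs : ME M μs = Real.logb 2 K := by
    have hVHLs : VHL μs = ((K:ℕ):ℝ)⁻¹ := by
      rw [VHL_eq μs hμs0]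
      have hsupℓ0 : Finset.univ.sup' Finset.univ_nonempty (fun h : Hi => μs (h, ℓ0))
          = ((K:ℕ):ℝ)⁻¹ := by
        apply le_antisymm
        · refine Finset.sup'_le _ _ fun h _ => ?_
          rw [hμs]
          dsimp only
          split
          · exact le_rfl
          · positivity
        · obtain ⟨oT, hoT⟩ := himg0ne
          have hmemT : rep oT ∈ T := Finset.mem_image_of_mem rep hoT
          have heq : μs (rep oT, ℓ0) = ((K:ℕ):ℝ)⁻¹ := by rw [hμs]; simp [hmemT]
          calc ((K:ℕ):ℝ)⁻¹ = μs (rep oT, ℓ0) := heq.symm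
            _ ≤ _ := Finset.le_sup' (fun h : Hi => μs (h, ℓ0)) (Finset.mem_univ (rep oT))
      have hsupℓ : ∀ ℓ, Finset.univ.sup' Finset.univ_nonempty (fun h : Hi => μs (h, ℓ))
          = if ℓ = ℓ0 then ((K:ℕ):ℝ)⁻¹ else 0 := by
        intro ℓ
        by_cases hℓ : ℓ = ℓ0
        · rw [if_pos hℓ, hℓ]
          exact hsupℓ0
        · rw [if_neg hℓ]
          have hz : ∀ h : Hi, μs (h, ℓ) = 0 := fun h => by rw [hμs]; simp [hℓ]
          rw [Finset.sup'_congr Finset.univ_nonempty rfl (fun h _ => hz h)]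
          exact Finset.sup'_const _ 0
      rw [Finset.sum_congr rfl fun ℓ _ => hsupℓ ℓ]
      simp
    have hVHOLs : VHOL M μs = 1 := by
      rw [VHOL_eq M μs hμs0]
      have hsup : ∀ (ℓ : Li) (o : Oi), Finset.univ.sup' Finset.univ_nonempty
          (fun h : Hi => if M (h, ℓ) = o then μs (h, ℓ) else 0)
          = if ℓ = ℓ0 ∧ o ∈ img0 then ((K:ℕ):ℝ)⁻¹ else 0 := by
        have hsup00 : ∀ o : Oi, Finset.univ.sup' Finset.univ_nonempty
            (fun h : Hi => if M (h, ℓ0) = o then μs (h, ℓ0) else 0)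
            = if o ∈ img0 then ((K:ℕ):ℝ)⁻¹ else 0 := by
          intro o
          by_cases ho : o ∈ img0
          · rw [if_pos ho,
              Finset.sup'_congr Finset.univ_nonempty rfl (fun h _ => hindterm o ho h)]
            apply le_antisymm
            · refine Finset.sup'_le _ _ fun h _ => ?_
              split
              · exact le_rfl
              · positivity
            · refine le_trans (le_of_eq ?_)
                (Finset.le_sup' (fun h : Hi => if h = rep o then ((K:ℕ):ℝ)⁻¹ else 0)
                  (Finset.mem_univ (rep o)))
              rw [if_pos rfl]
          · rw [if_neg ho]
            have hz : ∀ h : Hi, (if M (h, ℓ0) = o then μs (h, ℓ0) else 0) = 0 := fun h =>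
              if_neg fun heq => ho (Finset.mem_image.mpr ⟨h, Finset.mem_univ h, heq⟩)
            rw [Finset.sup'_congr Finset.univ_nonempty rfl (fun h _ => hz h)]
            exact Finset.sup'_const _ 0
        intro ℓ o
        by_cases hℓ : ℓ = ℓ0
        · rw [hℓ]
          have hcond : ((ℓ0 : Li) = ℓ0 ∧ o ∈ img0) = (o ∈ img0) := by simp
          simp only [eq_self_iff_true, true_and]
          exact hsup00 o
        · rw [if_neg (fun hc => hℓ hc.1)]
          have hz : ∀ h : Hi, (if M (h, ℓ) = o then μs (h, ℓ) else 0) = 0 := by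
            intro h
            have : μs (h, ℓ) = 0 := by rw [hμs]; simp [hℓ]
            rw [this]
            simp
          rw [Finset.sup'_congr Finset.univ_nonempty rfl (fun h _ => hz h)]
          exact Finset.sup'_const _ 0
      rw [Finset.sum_congr rfl fun ℓ _ => Finset.sum_congr rfl fun o _ => hsup ℓ o]
      have hrow : ∀ ℓ : Li, (∑ o : Oi, if ℓ = ℓ0 ∧ o ∈ img0 then ((K:ℕ):ℝ)⁻¹ else 0)
          = if ℓ = ℓ0 then 1 else 0 := by
        intro ℓ
        by_cases hℓ : ℓ = ℓ0
        · rw [hℓ, if_pos rfl]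
          have hceq : ∀ o : Oi, (if (ℓ0 : Li) = ℓ0 ∧ o ∈ img0 then ((K:ℕ):ℝ)⁻¹ else 0)
              = if o ∈ img0 then ((K:ℕ):ℝ)⁻¹ else 0 := by
            intro o
            simp
          rw [Finset.sum_congr rfl fun o _ => hceq o, Finset.sum_ite_mem,
            Finset.univ_inter, Finset.sum_const, nsmul_eq_mul]
          have himgK : ((img0.card : ℕ) : ℝ) = (K:ℝ) := by rw [hK, hn, himg0]
          rw [himgK]
          field_simp
        · rw [if_neg hℓ]
          refine Finset.sum_eq_zero fun o _ => if_neg fun hc => hℓ hc.1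
      rw [Finset.sum_congr rfl fun ℓ _ => hrow ℓ]
      simp
    unfold ME
    rw [hVHLs, hVHOLs]
    rw [one_div, one_div, inv_inv, inv_one, Real.logb_one, sub_zero]
  -- conclusion
  have hgt1 : IsGreatest
      {x : ℝ | ∃ μ : Hi × Li → ℝ, (∀ a, 0 ≤ μ a) ∧ (∑ a, μ a = 1) ∧ x = ME M μ}
      (Real.logb 2 K) := by
    constructor
    · exact ⟨μs, hμs0, hμs1, hMEs.symm⟩
    · rintro x ⟨μ, h0, h1, rfl⟩
      exact hME_le μ h0 h1
  have hgt2 : IsGreatest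
      {x : ℝ | ∃ μ : Hi × Li → ℝ, (∀ a, 0 ≤ μ a) ∧ (∑ a, μ a = 1) ∧ x = SE M μ}
      (Real.logb 2 K) := by
    constructor
    · exact ⟨μs, hμs0, hμs1, hSEs.symm⟩
    · rintro x ⟨μ, h0, h1, rfl⟩
      exact hSE_le μ h0 h1
  rw [hgt1.csSup_eq, CC, hgt2.csSup_eq]
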